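/- Let V be a finite-dimensional real inner product space, R ⊆ V ∖ {0} a root system spanning V, W the finite group generated by the reflections s_β for β ∈ R, Δ ⊆ R a system of simple roots and C = {v ∈ V : ⟨v, α⟩ ≥ 0 for all α ∈ Δ} the closed fundamental Weyl chamber. Then for every u ∈ C, the star St(u) := ⋃ { wC : w ∈ W, u ∈ wC } equals the set {v ∈ V : ⟨v, β⟩ ≥ 0 for every root β ∈ R with ⟨u, β⟩ > 0}, i.e. the intersection of the closed half-spaces determined by roots whose half-space contains u in its interior. In particular, St(u) is a convex cone. -/

import Mathlib

open scoped InnerProductSpace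

noncomputable section

/-- The orthogonal reflection of `V` in the hyperplane `β ⊥`. -/
def rootRefl {V : Type*} [NormedAddCommGroup V] [InnerProductSpace ℝ V]
    [FiniteDimensional ℝ V] (β : V) : V ≃ₗᵢ[ℝ] V :=
  Submodule.reflection (Submodule.span ℝ {β})ᗮ

section Aux

variable {V : Type*} [NormedAddCommGroup V] [InnerProductSpace ℝ V] [FiniteDimensional ℝ V]

theorem rootRefl_apply' (β x : V) (hβ : β ≠ 0) :
    rootRefl β x = x - (2 * ⟪x, β⟫_ℝ / ‖β‖ ^ 2) • β := by
  set c : ℝ := ⟪x, β⟫_ℝ / ‖β‖ ^ 2 with hc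
  have hb2 : (‖β‖ : ℝ) ^ 2 ≠ 0 := pow_ne_zero 2 (norm_ne_zero_iff.mpr hβ)
  have h1 : rootRefl β (x - c • β) = x - c • β := by
    apply Submodule.reflection_mem_subspace_eq_self
    rw [Submodule.mem_orthogonal_singleton_iff_inner_left]
    rw [inner_sub_left, real_inner_smul_left, real_inner_self_eq_norm_sq]
    rw [hc, div_mul_cancel₀ _ hb2, sub_self]
  have h2 : rootRefl β (c • β) = -(c • β) := by
    rw [map_smul]
    rw [show rootRefl β β = -β from Submodule.reflection_orthogonalComplement_singleton_eq_neg β]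
    simp
  have := congrArg₂ (· + ·) h1 h2
  simp only [← map_add, sub_add_cancel] at this
  rw [this]
  rw [show (2 * ⟪x, β⟫_ℝ / ‖β‖ ^ 2) = 2 * c by rw [hc]; ring]
  module

theorem rootRefl_inner' (β x y : V) (hβ : β ≠ 0) :
    ⟪y, rootRefl β x⟫_ℝ = ⟪y, x⟫_ℝ - (2 * ⟪x, β⟫_ℝ / ‖β‖ ^ 2) * ⟪y, β⟫_ℝ := by
  rw [rootRefl_apply' β x hβ, inner_sub_right, real_inner_smul_right]

theorem rootRefl_inv (β : V) : (rootRefl β)⁻¹ = rootRefl β := by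
  show (rootRefl β).symm = rootRefl β
  exact Submodule.reflection_symm

theorem rootRefl_eq_self_of_inner_eq_zero (β x : V) (h : ⟪x, β⟫_ℝ = 0) :
    rootRefl β x = x := by
  apply Submodule.reflection_mem_subspace_eq_self
  rwa [Submodule.mem_orthogonal_singleton_iff_inner_left]

end Aux

/-- Let `R` be a root system spanning `V`, `W` the group generated by the reflections in the
roots, `Δ ⊆ R` a system of simple roots (realized as a basis `b` all of whose members are
roots, such that every root has coordinates all `≥ 0` or all `≤ 0`), and
`C = {v : ⟨v, α⟩ ≥ 0 ∀ α ∈ Δ}` the closed fundamental Weyl chamber. Then for every `u ∈ C`,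
the star `St(u) = ⋃ {wC : w ∈ W, u ∈ wC}` equals
`{v : ⟨v, β⟩ ≥ 0 for every root β with ⟨u, β⟩ > 0}`; in particular `St(u)` is a convex cone. -/
theorem star_eq_intersection_of_root_halfspaces
    {V : Type*} [NormedAddCommGroup V] [InnerProductSpace ℝ V] [FiniteDimensional ℝ V]
    {ι : Type*} [Fintype ι]
    (R : Set V) (hRfin : R.Finite) (hR0 : (0 : V) ∉ R)
    (hRspan : Submodule.span ℝ R = ⊤)
    (hRrefl : ∀ β ∈ R, ∀ α ∈ R, rootRefl β α ∈ R)
    (b : Module.Basis ι ℝ V) (hΔR : ∀ i, b i ∈ R)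
    (hsimple : ∀ β ∈ R, (∀ i, 0 ≤ b.repr β i) ∨ (∀ i, b.repr β i ≤ 0))
    (W : Subgroup (V ≃ₗᵢ[ℝ] V))
    (hW : W = Subgroup.closure {w : V ≃ₗᵢ[ℝ] V | ∃ β ∈ R, w = rootRefl β})
    (C : Set V) (hC : C = {v : V | ∀ i, 0 ≤ ⟪v, b i⟫_ℝ}) :
    ∀ u ∈ C,
      {v : V | ∃ w ∈ W, u ∈ ⇑w '' C ∧ v ∈ ⇑w '' C}
          = {v : V | ∀ β ∈ R, 0 < ⟪u, β⟫_ℝ → 0 ≤ ⟪v, β⟫_ℝ} ∧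
      Convex ℝ {v : V | ∃ w ∈ W, u ∈ ⇑w '' C ∧ v ∈ ⇑w '' C} ∧
      ∀ t : ℝ, 0 ≤ t → ∀ v ∈ {v : V | ∃ w ∈ W, u ∈ ⇑w '' C ∧ v ∈ ⇑w '' C},
        t • v ∈ {v : V | ∃ w ∈ W, u ∈ ⇑w '' C ∧ v ∈ ⇑w '' C} := by
  -- every element of `W` maps `R` bijectively to `R`
  have hWR : ∀ w : V ≃ₗᵢ[ℝ] V, w ∈ W →
      (∀ α ∈ R, w α ∈ R) ∧ (∀ α ∈ R, w⁻¹ α ∈ R) := by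
    intro w hw
    rw [hW] at hw
    induction hw using Subgroup.closure_induction with
    | mem x hx =>
      obtain ⟨β, hβ, rfl⟩ := hx
      exact ⟨hRrefl β hβ, by rw [rootRefl_inv]; exact hRrefl β hβ⟩
    | one => exact ⟨fun α hα => by simpa using hα, fun α hα => by simpa using hα⟩
    | mul x y hx hy ihx ihy =>
      refine ⟨fun α hα => ?_, fun α hα => ?_⟩
      · show (y.trans x) α ∈ R
        exact ihx.1 _ (ihy.1 _ hα)
      · show ((y.trans x).symm) α ∈ R
        exact ihy.2 _ (ihx.2 _ hα)
    | inv x hx ihx =>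
      refine ⟨ihx.2, fun α hα => ?_⟩
      rw [inv_inv]; exact ihx.1 _ hα
  -- `W` is finite
  haveI hRsub : Finite ↥R := hRfin.to_subtype
  haveI hWfin : Finite ↥W := by
    have hinj : Function.Injective
        (fun w : ↥W => (fun β : ↥R => (⟨w.1 β.1, (hWR w.1 w.2).1 β.1 β.2⟩ : ↥R))) := by
      intro w₁ w₂ h
      have heq : ∀ β ∈ R, w₁.1 β = w₂.1 β := by
        intro β hβ
        have := congrFun h ⟨β, hβ⟩
        exact congrArg Subtype.val this
      have : (w₁.1 : V →ₗ[ℝ] V) = (w₂.1 : V →ₗ[ℝ] V) := by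
        apply LinearMap.ext_on hRspan
        intro x hx
        simpa using heq x hx
      ext x
      exact congrFun (congrArg (fun f : V →ₗ[ℝ] V => (f : V → V)) this) x
    exact Finite.of_injective _ hinj
  haveI : Nonempty ↥W := ⟨⟨1, W.one_mem⟩⟩
  -- a vector `d` with `⟪d, b i⟫ = 1` for all `i`
  have hsum : ∀ z γ : V, ⟪z, γ⟫_ℝ = ∑ i, b.repr γ i * ⟪z, b i⟫_ℝ := by
    intro z γ
    conv_lhs => rw [← b.sum_repr γ]
    rw [inner_sum]
    exact Finset.sum_congr rfl fun i _ => real_inner_smul_right z (b i) _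
  obtain ⟨d, hd⟩ : ∃ d : V, ∀ i, ⟪d, b i⟫_ℝ = 1 := by
    classical
    let T : V →ₗ[ℝ] (ι → ℝ) :=
      { toFun := fun v => fun i => ⟪v, b i⟫_ℝ
        map_add' := by intro x y; funext i; simp [inner_add_left]
        map_smul' := by intro c x; funext i; simp [real_inner_smul_left] }
    have hinj : Function.Injective T := by
      intro x y hxy
      have hzero : ∀ i, ⟪x - y, b i⟫_ℝ = 0 := by
        intro i
        have := congrFun hxy i
        simp only [T, LinearMap.coe_mk, AddHom.coe_mk] at this
        rw [inner_sub_left, this, sub_self]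
      have : ⟪x - y, x - y⟫_ℝ = 0 := by
        rw [hsum (x - y) (x - y)]
        exact Finset.sum_eq_zero fun i _ => by rw [hzero i, mul_zero]
      have := inner_self_eq_zero.mp this
      exact sub_eq_zero.mp this
    have hsurj : Function.Surjective T := by
      have hrank : Module.finrank ℝ V = Module.finrank ℝ (ι → ℝ) := by
        rw [Module.finrank_eq_card_basis b]
        simp
      exact (LinearMap.injective_iff_surjective_of_finrank_eq_finrank hrank).1 hinj
    obtain ⟨d, hd⟩ := hsurj (fun _ => 1)
    exact ⟨d, fun i => congrFun hd i⟩
  -- membership in a chamber, in terms of inner products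
  have hmem : ∀ (w : V ≃ₗᵢ[ℝ] V) (x : V), x ∈ ⇑w '' C ↔ ∀ i, 0 ≤ ⟪x, w (b i)⟫_ℝ := by
    intro w x
    constructor
    · rintro ⟨y, hy, rfl⟩ i
      rw [w.inner_map_map]
      rw [hC] at hy; exact hy i
    · intro h
      refine ⟨w.symm x, ?_, by simp⟩
      rw [hC]
      intro i
      have h2 : ⟪w.symm x, b i⟫_ℝ = ⟪x, w (b i)⟫_ℝ := by
        conv_rhs => rw [← w.apply_symm_apply x]
        rw [w.inner_map_map]
      rw [h2]
      exact h i
  -- positivity over C against roots expressed in simple coordinates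
  have hposC : ∀ x ∈ C, ∀ γ ∈ R, 0 < ⟪x, γ⟫_ℝ → (∀ y ∈ C, 0 ≤ ⟪y, γ⟫_ℝ) := by
    intro x hx γ hγ hpos y hy
    rw [hC] at hx hy
    rcases hsimple γ hγ with hnn | hnp
    · rw [hsum y γ]
      exact Finset.sum_nonneg fun i _ => mul_nonneg (hnn i) (hy i)
    · exfalso
      have : ⟪x, γ⟫_ℝ ≤ 0 := by
        rw [hsum x γ]
        exact Finset.sum_nonpos fun i _ =>
          mul_nonpos_of_nonpos_of_nonneg (hnp i) (hx i)
      linarith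
  -- reflections in roots belong to W
  have hreflW : ∀ β ∈ R, rootRefl β ∈ W := by
    intro β hβ
    rw [hW]
    exact Subgroup.subset_closure ⟨β, hβ, rfl⟩
  -- roots are nonzero
  have hRne : ∀ β ∈ R, β ≠ 0 := fun β hβ h => hR0 (h ▸ hβ)
  -- the key maximality step
  have hstep : ∀ (w : V ≃ₗᵢ[ℝ] V), w ∈ W → ∀ (x : V) (i : ι), ⟪x, w (b i)⟫_ℝ < 0 →
      ⟪x, w d⟫_ℝ < ⟪x, (rootRefl (w (b i)) * w) d⟫_ℝ := by
    intro w hw x i hneg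
    set β := w (b i) with hβdef
    have hβR : β ∈ R := (hWR w hw).1 _ (hΔR i)
    have hβne : β ≠ 0 := hRne β hβR
    have hdβ : ⟪w d, β⟫_ℝ = 1 := by rw [hβdef, w.inner_map_map]; exact hd i
    have : ⟪x, (rootRefl β * w) d⟫_ℝ
        = ⟪x, w d⟫_ℝ - (2 * ⟪w d, β⟫_ℝ / ‖β‖ ^ 2) * ⟪x, β⟫_ℝ := by
      show ⟪x, rootRefl β (w d)⟫_ℝ = _
      rw [rootRefl_inner' β (w d) x hβne]
    rw [this, hdβ]
    have hb2 : (0:ℝ) < ‖β‖ ^ 2 := pow_pos (norm_pos_iff.mpr hβne) 2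
    have : (2 * 1 / ‖β‖ ^ 2) * ⟪x, β⟫_ℝ < 0 := by
      apply mul_neg_of_pos_of_neg
      · exact div_pos (by norm_num) hb2
      · exact hneg
    linarith
  -- every point lies in some chamber
  have hcover : ∀ x : V, ∃ w : ↥W, x ∈ ⇑(w.1) '' C := by
    intro x
    obtain ⟨w, hwmax⟩ := Finite.exists_max (fun w : ↥W => ⟪x, w.1 d⟫_ℝ)
    refine ⟨w, (hmem w.1 x).2 fun i => ?_⟩
    by_contra hneg
    push_neg at hneg
    have hlt := hstep w.1 w.2 x i hneg
    have hW' : rootRefl (w.1 (b i)) * w.1 ∈ W :=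
      W.mul_mem (hreflW _ ((hWR w.1 w.2).1 _ (hΔR i))) w.2
    exact absurd (hwmax ⟨_, hW'⟩) (not_le.mpr hlt)
  intro u hu
  have hmain : {v : V | ∃ w ∈ W, u ∈ ⇑w '' C ∧ v ∈ ⇑w '' C}
      = {v : V | ∀ β ∈ R, 0 < ⟪u, β⟫_ℝ → 0 ≤ ⟪v, β⟫_ℝ} := by
    ext v
    simp only [Set.mem_setOf_eq]
    constructor
    · rintro ⟨w, hwW, hu', hv'⟩ β hβ hpos
      obtain ⟨u₀, hu₀, rfl⟩ := hu'
      obtain ⟨v₀, hv₀, rfl⟩ := hv'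
      set γ := w⁻¹ β with hγdef
      have hγR : γ ∈ R := (hWR w hwW).2 β hβ
      have hwγ : w γ = β := by
        show w (w.symm β) = β
        exact w.apply_symm_apply β
      have hpos' : 0 < ⟪u₀, γ⟫_ℝ := by
        rw [← hwγ, w.inner_map_map] at hpos
        exact hpos
      have h3 := hposC u₀ hu₀ γ hγR hpos' v₀ hv₀
      rw [← hwγ, w.inner_map_map]
      exact h3
    · intro hv
      -- choose a chamber containing v maximizing ⟪u, w d⟫
      haveI : Nonempty {w : ↥W // v ∈ ⇑(w.1.1) '' C} := by
        obtain ⟨w, hw⟩ := hcover v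
        exact ⟨⟨w, hw⟩⟩
      obtain ⟨w, hwmax⟩ :=
        Finite.exists_max (fun w : {w : ↥W // v ∈ ⇑(w.1.1) '' C} => ⟪u, w.1.1.1 d⟫_ℝ)
      set w₀ : V ≃ₗᵢ[ℝ] V := w.1.1 with hw₀
      have hw₀W : w₀ ∈ W := w.1.2
      have hvw : v ∈ ⇑w₀ '' C := w.2
      have huw : u ∈ ⇑w₀ '' C := by
        rw [hmem]
        intro i
        by_contra hneg
        push_neg at hneg
        set β := w₀ (b i) with hβdef
        have hβR : β ∈ R := (hWR w₀ hw₀W).1 _ (hΔR i)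
        have hβne : β ≠ 0 := hRne β hβR
        -- ⟪v, β⟫ = 0
        have hmβ : -β ∈ R := by
          have h4 := hRrefl β hβR β hβR
          rwa [show rootRefl β β = -β from
            Submodule.reflection_orthogonalComplement_singleton_eq_neg β] at h4
        have humβ : 0 < ⟪u, -β⟫_ℝ := by
          rw [inner_neg_right]; linarith
        have hvmβ : 0 ≤ ⟪v, -β⟫_ℝ := hv (-β) hmβ humβ
        have hvβ' : 0 ≤ ⟪v, β⟫_ℝ := ((hmem w₀ v).1 hvw) i
        have hvβ : ⟪v, β⟫_ℝ = 0 := by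
          rw [inner_neg_right] at hvmβ; linarith
        -- the reflected chamber also contains v
        have hvfix : rootRefl β v = v := rootRefl_eq_self_of_inner_eq_zero β v hvβ
        have hW' : rootRefl β * w₀ ∈ W := W.mul_mem (hreflW β hβR) hw₀W
        have hvw' : v ∈ ⇑(rootRefl β * w₀) '' C := by
          obtain ⟨v₀, hv₀, hveq⟩ := hvw
          exact ⟨v₀, hv₀, by show rootRefl β (w₀ v₀) = v; rw [hveq, hvfix]⟩
        have hlt := hstep w₀ hw₀W u i hneg
        rw [← hβdef] at hlt
        exact absurd (hwmax ⟨⟨rootRefl β * w₀, hW'⟩, hvw'⟩) (not_le.mpr hlt)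
      exact ⟨w₀, hw₀W, huw, hvw⟩
  refine ⟨hmain, ?_, ?_⟩
  · rw [hmain]
    intro x hx y hy a c ha hc hac
    intro β hβ hpos
    have hx' := hx β hβ hpos
    have hy' := hy β hβ hpos
    rw [inner_add_left, real_inner_smul_left, real_inner_smul_left]
    have := add_nonneg (mul_nonneg ha hx') (mul_nonneg hc hy')
    linarith
  · rw [hmain]
    intro t ht v hv β hβ hpos
    rw [real_inner_smul_left]
    exact mul_nonneg ht (hv β hβ hpos)
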